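/- Model Minkowski spacetime as ℝ⁴ with quadratic form Q(v) = −v₀² + v₁² + v₂² + v₃². Let 0 < v < 1 and c > 0, and consider the clocks γ(t) = (t, 0, 0, 0) and γ̃(s) = (s, v·s + c, 0, 0). Then: (i) for every s ∈ ℝ with v·s + c ≠ 0, the set {t ∈ ℝ : Q(γ(t) − γ̃(s)) = 0} equals {s − |v·s + c|, s + |v·s + c|}, whose midpoint is s, so γ̃ is Einstein synchroneous to γ; (ii) for every t ∈ ℝ, the set {s ∈ ℝ : Q(γ̃(s) − γ(t)) = 0} equals {(t − c)/(1 + v), (t + c)/(1 − v)}, whose midpoint is (t + v·c)/(1 − v²), which differs from t for t = 0. Hence γ is not Einstein synchroneous to γ̃: the relation of being Einstein synchroneous is not symmetric. -/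
import Mathlib


/-- The Minkowski quadratic form on `ℝ⁴`. -/
noncomputable def minkQ (v : Fin 4 → ℝ) : ℝ :=
  -(v 0) ^ 2 + (v 1) ^ 2 + (v 2) ^ 2 + (v 3) ^ 2

/-- Section 5 example of the paper: for the inertial clocks `γ(t) = (t,0,0,0)` and
`γ̃(s) = (s, v s + c, 0, 0)` with `0 < v < 1`, `c > 0`, the clock `γ̃` is Einstein
synchroneous to `γ` (the two light-ray parameters on `γ` through `γ̃(s)` are
`s ∓ |v s + c|`, with midpoint `s`), but `γ` is not Einstein synchroneous to `γ̃`
(the two parameters on `γ̃` through `γ(t)` are `(t-c)/(1+v)` and `(t+c)/(1-v)`, with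
midpoint `(t + v c)/(1 - v²) ≠ t` for `t = 0`): Einstein synchroneity is not a
symmetric relation. -/
theorem einstein_synchroneity_not_symmetric
    (v c : ℝ) (hv0 : 0 < v) (hv1 : v < 1) (hc : c > 0)
    (γ γt : ℝ → Fin 4 → ℝ)
    (hγ : ∀ t : ℝ, γ t = ![t, 0, 0, 0])
    (hγt : ∀ s : ℝ, γt s = ![s, v * s + c, 0, 0]) :
    (∀ s : ℝ, v * s + c ≠ 0 →
      {t : ℝ | minkQ (γ t - γt s) = 0} = {s - |v * s + c|, s + |v * s + c|} ∧
      ((s - |v * s + c|) + (s + |v * s + c|)) / 2 = s) ∧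
    (∀ t : ℝ,
      {s : ℝ | minkQ (γt s - γ t) = 0} = {(t - c) / (1 + v), (t + c) / (1 - v)} ∧
      ((t - c) / (1 + v) + (t + c) / (1 - v)) / 2 = (t + v * c) / (1 - v ^ 2)) ∧
    ((0 : ℝ) + v * c) / (1 - v ^ 2) ≠ 0 := by
  have h1v : (1 : ℝ) + v ≠ 0 := by nlinarith
  have h1v' : (1 : ℝ) - v ≠ 0 := by nlinarith
  have hvsq : (1 : ℝ) - v ^ 2 ≠ 0 := by nlinarith
  refine ⟨fun s hs => ?_, fun t => ?_, ?_⟩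
  · constructor
    · ext t
      simp only [Set.mem_setOf_eq, minkQ, hγ, hγt, Pi.sub_apply, Matrix.cons_val_zero,
        Matrix.cons_val_one, Matrix.head_cons, Matrix.cons_val_two, Matrix.tail_cons,
        Matrix.cons_val_three, Set.mem_insert_iff, Set.mem_singleton_iff]
      constructor
      · intro h
        have h2 : (t - (s - |v * s + c|)) * (t - (s + |v * s + c|)) = 0 := by
          have := sq_abs (v * s + c); nlinarith [sq_abs (v * s + c)]
        rcases mul_eq_zero.1 h2 with h | h
        · left; linarith
        · right; linarith
      · rintro (h | h) <;> subst h <;> nlinarith [sq_abs (v * s + c)]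
    · ring
  · constructor
    · ext s
      simp only [Set.mem_setOf_eq, minkQ, hγ, hγt, Pi.sub_apply, Matrix.cons_val_zero,
        Matrix.cons_val_one, Matrix.head_cons, Matrix.cons_val_two, Matrix.tail_cons,
        Matrix.cons_val_three, Set.mem_insert_iff, Set.mem_singleton_iff]
      constructor
      · intro h
        have h2 : ((1 + v) * s - (t - c)) * ((1 - v) * s - (t + c)) = 0 := by nlinarith
        rcases mul_eq_zero.1 h2 with h | h
        · left; field_simp; linarith
        · right; field_simp; linarith
      · rintro (h | h) <;> subst h <;> field_simp <;> ring
    · field_simp; ring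
  · simp only [zero_add]
    exact div_ne_zero (by positivity) hvsq
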